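/- Let (R, m) be a local commutative ring, S a commutative ring, f : R → S a ring homomorphism, and J a proper ideal of S with J ⊆ Jac(S). Assume f maps every regular element of R to a regular element of S. If the amalgamation R ⋈^f J is a Prüfer ring, then R is a Prüfer ring and J = f(r)·J for every regular element r of R. -/

import Mathlib

open Pointwise

/-- The amalgamation `R ⋈^f J` of `R` with `S` along the ideal `J` with respect to
`f : R →+* S`, as a subring of `R × S`. -/
def amalgamation {R S : Type*} [CommRing R] [CommRing S] (f : R →+* S) (J : Ideal S) :
    Subring (R × S) where
  carrier := {p | ∃ j ∈ J, p.2 = f p.1 + j}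
  zero_mem' := ⟨0, J.zero_mem, by simp⟩
  one_mem' := ⟨0, J.zero_mem, by simp⟩
  add_mem' := by
    rintro ⟨a, a'⟩ ⟨b, b'⟩ ⟨j, hj, h1⟩ ⟨k, hk, h2⟩
    exact ⟨j + k, J.add_mem hj hk, by simp_all; ring⟩
  neg_mem' := by
    rintro ⟨a, a'⟩ ⟨j, hj, h1⟩
    exact ⟨-j, J.neg_mem hj, by simp_all; ring⟩
  mul_mem' := by
    rintro ⟨a, a'⟩ ⟨b, b'⟩ ⟨j, hj, h1⟩ ⟨k, hk, h2⟩
    refine ⟨f a * k + j * f b + j * k, ?_, by simp_all; ring⟩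
    exact J.add_mem (J.add_mem (J.mul_mem_left _ hk) (J.mul_mem_right _ hj))
      (J.mul_mem_right _ hj)

/-- The set of zero-divisors of a commutative ring `A`. -/
def zdivSet (A : Type*) [CommRing A] : Set A := {a | ∃ b, b ≠ 0 ∧ a * b = 0}

/-- A commutative ring is a Prüfer ring if every nonzero finitely generated regular ideal
is projective (equivalently, invertible). -/
def IsPruferRing (A : Type*) [CommRing A] : Prop :=
  ∀ I : Ideal A, I ≠ ⊥ → I.FG → (∃ r ∈ I, r ∈ nonZeroDivisors A) → Module.Projective A I

section Helpers

/-- A principal ideal generated by a regular element is projective. -/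
lemma span_singleton_projective {A : Type*} [CommRing A] {a : A} (ha : a ∈ nonZeroDivisors A) :
    Module.Projective A (Ideal.span {a} : Ideal A) := by
  have hmem : a ∈ Ideal.span {a} := Ideal.subset_span rfl
  let g : A →ₗ[A] (Ideal.span {a} : Ideal A) :=
    LinearMap.toSpanSingleton A _ (⟨a, hmem⟩ : Ideal.span {a})
  have hbij : Function.Bijective g := by
    constructor
    · intro c d h
      have h2 : c * a = d * a := congrArg Subtype.val h
      have h3 : (c - d) * a = 0 := by rw [sub_mul, h2, sub_self]
      exact sub_eq_zero.mp (mem_nonZeroDivisors_iff_right.mp ha _ h3)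
    · rintro ⟨y, hy⟩
      obtain ⟨c, hc⟩ := Ideal.mem_span_singleton'.mp hy
      exact ⟨c, Subtype.ext (by simpa [g, LinearMap.toSpanSingleton] using hc)⟩
  exact Module.Projective.of_equiv (LinearEquiv.ofBijective g hbij)

/-- In a local Prüfer ring, every nonzero f.g. regular ideal is principal,
generated by a regular element. -/
lemma prufer_local_principal {A : Type*} [CommRing A] [IsLocalRing A] (hP : IsPruferRing A)
    (I : Ideal A) (hne : I ≠ ⊥) (hfg : I.FG)
    (hr : ∃ r ∈ I, r ∈ nonZeroDivisors A) :
    ∃ x ∈ I, x ∈ nonZeroDivisors A ∧ I = Ideal.span {x} := by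
  have hproj : Module.Projective A I := hP I hne hfg hr
  have hfin : Module.Finite A I := Module.Finite.iff_fg.mpr hfg
  have hfp : Module.FinitePresentation A I := Module.finitePresentation_of_projective A I
  have hfree : Module.Free A I := Module.free_of_flat_of_isLocalRing
  let B := Module.Free.chooseBasis A I
  set ι := Module.Free.ChooseBasisIndex A I
  have hnontriv : Nontrivial I := by
    obtain ⟨y, hyI, hy0⟩ := Submodule.exists_mem_ne_zero_of_ne_bot hne
    exact ⟨⟨⟨y, hyI⟩, 0, by simpa using hy0⟩⟩
  have hne' : Nonempty ι := B.index_nonempty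
  have hsub : Subsingleton ι := by
    by_contra h
    obtain ⟨i, j, hij⟩ := not_subsingleton_iff_nontrivial.mp h |>.exists_pair_ne
    have hrel : ((B j : A) • B i : I) = (B i : A) • B j := by
      apply Subtype.ext
      show (B j : A) * (B i : A) = (B i : A) * (B j : A)
      ring
    have := congrArg (fun z => B.repr z j) hrel
    simp only [map_smul] at this
    rw [B.repr_self, B.repr_self] at this
    simp only [Finsupp.smul_single, smul_eq_mul, mul_one] at this
    have h2 : (Finsupp.single i ((B j : A)) : ι →₀ A) j = (Finsupp.single j ((B i : A))) j := by
      rw [this]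
    rw [Finsupp.single_eq_of_ne' hij, Finsupp.single_eq_same] at h2
    exact B.ne_zero i (Submodule.coe_eq_zero.mp h2.symm)
  obtain ⟨i0⟩ := hne'
  refine ⟨(B i0 : A), (B i0).2, ?_, ?_⟩
  · rw [mem_nonZeroDivisors_iff_right]
    intro b hb
    have h0 : (b • B i0 : I) = 0 := by
      apply Subtype.ext
      show b * (B i0 : A) = 0
      exact hb
    have := congrArg (fun z => B.repr z i0) h0
    simpa using this
  · apply le_antisymm
    · intro y hy
      have hyrep : (⟨y, hy⟩ : I) = (B.repr ⟨y, hy⟩ i0) • B i0 := by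
        conv_lhs => rw [← B.sum_repr ⟨y, hy⟩]
        rw [Finset.sum_eq_single i0]
        · intro b _ hb; exact absurd (Subsingleton.elim b i0) hb
        · intro h; exact absurd (Finset.mem_univ i0) h
      have : y = (B.repr ⟨y, hy⟩ i0) * (B i0 : A) := congrArg Subtype.val hyrep
      exact Ideal.mem_span_singleton'.mpr ⟨_, this.symm⟩
    · rw [Ideal.span_le, Set.singleton_subset_iff]
      exact (B i0).2

variable {R S : Type*} [CommRing R] [CommRing S] (f : R →+* S) (J : Ideal S)

/-- The inclusion `R → R ⋈^f J`. -/
def amalgInc : R →+* amalgamation f J where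
  toFun r := ⟨(r, f r), ⟨0, J.zero_mem, by simp⟩⟩
  map_one' := by ext <;> simp
  map_mul' a b := by ext <;> simp
  map_zero' := by ext <;> simp
  map_add' a b := by ext <;> simp

/-- The projection `R ⋈^f J → R`. -/
def amalgProj : amalgamation f J →+* R :=
  (RingHom.fst R S).comp (amalgamation f J).subtype

lemma amalg_isUnit (hJjac : J ≤ Ideal.jacobson (⊥ : Ideal S))
    (a : amalgamation f J) (h : IsUnit (a : R × S).1) : IsUnit a := by
  obtain ⟨j, hj, hEq⟩ := a.2
  obtain ⟨ur, hur⟩ := h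
  set uf : Sˣ := Units.map (f : R →* S) ur with huf
  have hufv : (uf : S) = f (a : R × S).1 := by rw [huf, ← hur]; rfl
  have hs : IsUnit (a : R × S).2 := by
    have h1 : IsUnit (j * (↑uf⁻¹ : S) + 1) := Ideal.mem_jacobson_bot.mp (hJjac hj) _
    have : (a : R × S).2 = (uf : S) * (j * (↑uf⁻¹ : S) + 1) := by
      rw [hEq, ← hufv]; rw [mul_add, mul_one, mul_left_comm, Units.mul_inv, mul_one]; ring
    rw [this]
    exact uf.isUnit.mul h1
  obtain ⟨us, hus⟩ := hs
  have hkmem : (↑us⁻¹ : S) - f (↑ur⁻¹ : R) ∈ J := by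
    have hfinv : f (↑ur⁻¹ : R) = (↑uf⁻¹ : S) := by rw [huf]; rfl
    have key : (↑us⁻¹ : S) - (↑uf⁻¹ : S) = (↑us⁻¹ : S) * (↑uf⁻¹ : S) * ((uf : S) - (us : S)) := by
      linear_combination (-(↑us⁻¹ : S)) * uf.inv_mul + (↑uf⁻¹ : S) * us.inv_mul
    rw [hfinv, key, hus, hufv, hEq]
    have : f (a : R × S).1 - (f (a : R × S).1 + j) = -j := by ring
    rw [this]
    exact J.mul_mem_left _ (J.neg_mem hj)
  refine ⟨⟨a, ⟨((↑ur⁻¹ : R), (↑us⁻¹ : S)), ?_⟩, ?_, ?_⟩, rfl⟩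
  · exact ⟨(↑us⁻¹ : S) - f (↑ur⁻¹ : R), hkmem, by ring⟩
  · apply Subtype.ext
    show ((a : R × S).1 * ↑ur⁻¹, (a : R × S).2 * ↑us⁻¹) = (1, 1)
    rw [← hur, ← hus]
    simp
  · apply Subtype.ext
    show (↑ur⁻¹ * (a : R × S).1, ↑us⁻¹ * (a : R × S).2) = (1, 1)
    rw [← hur, ← hus]
    simp

lemma amalg_local [IsLocalRing R] (hJjac : J ≤ Ideal.jacobson (⊥ : Ideal S)) :
    IsLocalRing (amalgamation f J) := by
  apply IsLocalRing.of_isUnit_or_isUnit_one_sub_self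
  intro a
  rcases IsLocalRing.isUnit_or_isUnit_one_sub_self ((a : R × S).1) with h | h
  · exact Or.inl (amalg_isUnit f J hJjac a h)
  · refine Or.inr (amalg_isUnit f J hJjac (1 - a) ?_)
    have : ((1 - a : amalgamation f J) : R × S).1 = 1 - (a : R × S).1 := rfl
    rw [this]; exact h

lemma amalg_regular (x : amalgamation f J) (h1 : (x : R × S).1 ∈ nonZeroDivisors R)
    (h2 : (x : R × S).2 ∈ nonZeroDivisors S) :
    x ∈ nonZeroDivisors (amalgamation f J) := by
  rw [mem_nonZeroDivisors_iff_right]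
  intro b hb
  have hb' : ((b : R × S).1 * (x : R × S).1, (b : R × S).2 * (x : R × S).2) = (0, 0) :=
    congrArg Subtype.val hb
  apply Subtype.ext
  show (b : R × S) = (0 : R × S)
  exact Prod.ext (mem_nonZeroDivisors_iff_right.mp h1 _ (congrArg Prod.fst hb')) (mem_nonZeroDivisors_iff_right.mp h2 _ (congrArg Prod.snd hb'))

end Helpers

theorem stmt7 {R S : Type*} [CommRing R] [CommRing S] [IsLocalRing R]
    (f : R →+* S) (J : Ideal S) (hJ : J ≠ ⊤) (hJjac : J ≤ Ideal.jacobson (⊥ : Ideal S))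
    (hreg : ∀ r ∈ nonZeroDivisors R, f r ∈ nonZeroDivisors S)
    (hP : IsPruferRing (amalgamation f J)) :
    IsPruferRing R ∧ ∀ r ∈ nonZeroDivisors R, f r • J = J := by
  haveI hAloc : IsLocalRing (amalgamation f J) := amalg_local f J hJjac
  constructor
  · -- R is Prüfer
    intro I hne hfg hrex
    obtain ⟨r, hrI, hrreg⟩ := hrex
    set I' : Ideal (amalgamation f J) := I.map (amalgInc f J) with hI'
    have hfg' : I'.FG := Ideal.FG.map hfg _
    have hrmem : amalgInc f J r ∈ I' := Ideal.mem_map_of_mem _ hrI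
    have hrreg' : amalgInc f J r ∈ nonZeroDivisors (amalgamation f J) :=
      amalg_regular f J _ hrreg (hreg r hrreg)
    have hr0 : r ≠ 0 := nonZeroDivisors.ne_zero hrreg
    have hne' : I' ≠ ⊥ := by
      intro h
      rw [h] at hrmem
      have h0 : amalgInc f J r = 0 := by simpa using hrmem
      exact hr0 (congrArg (fun z => (amalgProj f J) z) h0)
    obtain ⟨x, hxI', hxreg, hxspan⟩ := prufer_local_principal hP I' hne' hfg' ⟨_, hrmem, hrreg'⟩
    set a : R := amalgProj f J x with ha
    have hcomp : (amalgProj f J).comp (amalgInc f J) = RingHom.id R := RingHom.ext fun _ => rfl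
    have hIa : I = Ideal.span {a} := by
      have h1 : I'.map (amalgProj f J) = I := by
        rw [hI', Ideal.map_map, hcomp, Ideal.map_id]
      rw [← h1, hxspan, Ideal.map_span, Set.image_singleton]
    have hareg : a ∈ nonZeroDivisors R := by
      rw [mem_nonZeroDivisors_iff_right]
      intro b hb
      obtain ⟨c, hc⟩ := Ideal.mem_span_singleton'.mp (hIa ▸ hrI)
      apply mem_nonZeroDivisors_iff_right.mp hrreg b
      rw [← hc]
      calc b * (c * a) = c * (b * a) := by ring
      _ = 0 := by rw [hb, mul_zero]
    rw [hIa]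
    exact span_singleton_projective hareg
  · -- f r • J = J
    intro r hrreg
    apply le_antisymm
    · intro x hx
      rw [← SetLike.mem_coe, Submodule.coe_pointwise_smul] at hx
      obtain ⟨y, hy, rfl⟩ := hx
      exact J.mul_mem_left _ hy
    · intro j hj
      set x1 : amalgamation f J := amalgInc f J r with hx1
      have hx2mem : ((r, f r + j) : R × S) ∈ amalgamation f J := ⟨j, hj, rfl⟩
      set x2 : amalgamation f J := ⟨(r, f r + j), hx2mem⟩ with hx2
      set I' : Ideal (amalgamation f J) := Ideal.span {x1, x2} with hI'
      have hx1mem : x1 ∈ I' := Ideal.subset_span (Set.mem_insert _ _)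
      have hx2mem' : x2 ∈ I' := Ideal.subset_span (Set.mem_insert_of_mem _ rfl)
      have hx1reg : x1 ∈ nonZeroDivisors (amalgamation f J) :=
        amalg_regular f J _ hrreg (hreg r hrreg)
      have hr0 : r ≠ 0 := nonZeroDivisors.ne_zero hrreg
      have hne' : I' ≠ ⊥ := by
        intro h
        rw [h] at hx1mem
        have h0 : x1 = 0 := by simpa using hx1mem
        exact hr0 (congrArg (fun z => (amalgProj f J) z) h0)
      have hfg' : I'.FG := Submodule.fg_span ((Set.finite_singleton x2).insert x1)
      obtain ⟨x, hxI, hxreg, hxspan⟩ :=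
        prufer_local_principal hP I' hne' hfg' ⟨x1, hx1mem, hx1reg⟩
      obtain ⟨γ, hγ⟩ := Ideal.mem_span_singleton'.mp (hxspan ▸ hx1mem)
      obtain ⟨δ, hδ⟩ := Ideal.mem_span_singleton'.mp (hxspan ▸ hx2mem')
      obtain ⟨α, β, hαβ⟩ := Ideal.mem_span_pair.mp (hI' ▸ hxI)
      have hone : α * γ + β * δ = 1 := by
        have h0 : (α * γ + β * δ - 1) * x = 0 := by
          have hh : (α * γ + β * δ) * x = x := by
            calc (α * γ + β * δ) * x = α * (γ * x) + β * (δ * x) := by ring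
            _ = x := by rw [hγ, hδ]; exact hαβ
          rw [sub_mul, hh, one_mul, sub_self]
        exact sub_eq_zero.mp (mem_nonZeroDivisors_iff_right.mp hxreg _ h0)
      have hcase : (∃ t : amalgamation f J, x2 = t * x1) ∨
          (∃ t : amalgamation f J, x1 = t * x2) := by
        rcases IsLocalRing.isUnit_or_isUnit_of_add_one hone with h | h
        · left
          obtain ⟨u, hu⟩ := isUnit_of_mul_isUnit_right h
          have hx : x = ↑u⁻¹ * x1 := by
            rw [← hγ, ← hu, ← mul_assoc, Units.inv_mul, one_mul]
          exact ⟨δ * ↑u⁻¹, by rw [← hδ, hx]; ring⟩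
        · right
          obtain ⟨u, hu⟩ := isUnit_of_mul_isUnit_right h
          have hx : x = ↑u⁻¹ * x2 := by
            rw [← hδ, ← hu, ← mul_assoc, Units.inv_mul, one_mul]
          exact ⟨γ * ↑u⁻¹, by rw [← hγ, hx]; ring⟩
      rcases hcase with ⟨t, ht⟩ | ⟨t, ht⟩
      · -- x2 = t * x1 : j = k * f r
        obtain ⟨k, hk, hkEq⟩ := t.2
        have hco : ((r, f r + j) : R × S) = ((t : R × S).1 * r, (t : R × S).2 * f r) :=
          congrArg Subtype.val ht
        have h1 : r = (t : R × S).1 * r := congrArg Prod.fst hco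
        have ha1 : (t : R × S).1 = 1 := by
          have : ((t : R × S).1 - 1) * r = 0 := by rw [sub_mul, one_mul, ← h1, sub_self]
          exact sub_eq_zero.mp (mem_nonZeroDivisors_iff_right.mp hrreg _ this)
        have h2 : f r + j = (t : R × S).2 * f r := congrArg Prod.snd hco
        rw [hkEq, ha1, map_one] at h2
        have hjk : j = f r * k := by linear_combination h2
        have hmem : f r • k ∈ f r • J := Submodule.smul_mem_pointwise_smul _ _ _ hk
        simpa [smul_eq_mul, ← hjk] using hmem
      · -- x1 = t * x2 : j = f r * (-(u⁻¹ * k))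
        obtain ⟨k, hk, hkEq⟩ := t.2
        have hco : ((r, f r) : R × S) = ((t : R × S).1 * r, (t : R × S).2 * (f r + j)) :=
          congrArg Subtype.val ht
        have h1 : r = (t : R × S).1 * r := congrArg Prod.fst hco
        have ha1 : (t : R × S).1 = 1 := by
          have : ((t : R × S).1 - 1) * r = 0 := by rw [sub_mul, one_mul, ← h1, sub_self]
          exact sub_eq_zero.mp (mem_nonZeroDivisors_iff_right.mp hrreg _ this)
        have h2 : f r = (t : R × S).2 * (f r + j) := congrArg Prod.snd hco
        rw [hkEq, ha1, map_one] at h2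
        obtain ⟨u, hu⟩ := Ideal.mem_jacobson_bot.mp (hJjac hk) 1
        have hj1 : j * ↑u = -(k * f r) := by rw [hu]; linear_combination -h2
        have hj2 : j = -(k * f r) * ↑u⁻¹ := by
          rw [← hj1, mul_assoc, Units.mul_inv, mul_one]
        have hmem : f r • (-((↑u⁻¹ : S) * k)) ∈ f r • J :=
          Submodule.smul_mem_pointwise_smul _ _ _ (J.neg_mem (J.mul_mem_left _ hk))
        have he : f r • (-((↑u⁻¹ : S) * k)) = j := by rw [smul_eq_mul, hj2]; ring
        exact he ▸ hmem
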